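/- Let Ã : [0,1] → ℂ^{N×N} be real analytic and B̃ : [0,1]² → ℂ^{N×N} be real analytic. Fix s ∈ [0,1]. Define the iterated Volterra kernels of A(t,s) = Ã(t)Θ(t−s) by K₁(t,s) := Ã(t) and K_{k+1}(t,s) := ∫ₛᵗ K_k(t,τ) Ã(τ) dτ, and set C̃(t,s) := Σ_{k≥1} K_k(t,s) (which converges uniformly on 0 ≤ s ≤ t ≤ 1). Then the function U(t) := I_N + ∫ₛᵗ [ C̃(τ,s) + B̃(τ,s) + ∫ₛ^τ C̃(τ,ρ) B̃(ρ,s) dρ ] dτ is the unique continuously differentiable solution on [s,1] of the non-homogeneous initial value problem ∂ₜU(t) = Ã(t) U(t) + B̃(t,s), U(s) = I_N. -/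

import Mathlib

open MeasureTheory Set Filter

attribute [local instance] Matrix.frobeniusNormedAddCommGroup Matrix.frobeniusNormedSpace

/-- The iterated Volterra kernels of `A(t,s) = Ã(t)Θ(t−s)`:
`K₁(t,s) = Ã(t)` and `K_{k+1}(t,s) = ∫ₛᵗ K_k(t,τ) Ã(τ) dτ` (entrywise integral). -/
noncomputable def iterK {N : ℕ} (A : ℝ → Matrix (Fin N) (Fin N) ℂ) :
    ℕ → ℝ → ℝ → Matrix (Fin N) (Fin N) ℂ
  | 0 => fun _ _ => 0
  | 1 => fun t _ => A t
  | (k + 2) => fun t s =>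
      Matrix.of fun i j => ∫ τ in s..t, (iterK A (k + 1) t τ * A τ) i j

/-- `C̃(t,s) = Σ_{k ≥ 1} K_k(t,s)`, the analytic part of `Σ_{k ≥ 1} A^{★k}`. -/
noncomputable def resolventSum {N : ℕ} (A : ℝ → Matrix (Fin N) (Fin N) ℂ)
    (t s : ℝ) : Matrix (Fin N) (Fin N) ℂ :=
  ∑' k : ℕ, iterK A (k + 1) t s

/-- The ★-product closed-form solution
`U = Θ ★ R_★(A) ★ (I_★ + B)` written as a function:
`U(t) = I_N + ∫ₛᵗ [ C̃(τ,s) + B̃(τ,s) + ∫ₛ^τ C̃(τ,ρ) B̃(ρ,s) dρ ] dτ`. -/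
noncomputable def solU {N : ℕ} (A : ℝ → Matrix (Fin N) (Fin N) ℂ)
    (B : ℝ × ℝ → Matrix (Fin N) (Fin N) ℂ) (s t : ℝ) :
    Matrix (Fin N) (Fin N) ℂ :=
  1 + Matrix.of fun i j =>
    ∫ τ in s..t,
      (resolventSum A τ s + B (τ, s)
        + Matrix.of fun i' j' => ∫ ρ in s..τ, (resolventSum A τ ρ * B (ρ, s)) i' j') i j

section Aux
attribute [local instance] Matrix.frobeniusNormedRing Matrix.frobeniusNormedAlgebra

namespace SolUAux

open Topology

variable {N : ℕ}

/-- the Frobenius topology, preferred over the product topology in this section -/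
noncomputable abbrev frobTop : TopologicalSpace (Matrix (Fin N) (Fin N) ℂ) :=
  @UniformSpace.toTopologicalSpace _
    (@PseudoMetricSpace.toUniformSpace _ Matrix.frobeniusNormedAddCommGroup.toPseudoMetricSpace)

attribute [local instance] frobTop

/-- entry evaluation as a continuous linear map -/
noncomputable def entryCLM (i j : Fin N) : Matrix (Fin N) (Fin N) ℂ →L[ℝ] ℂ :=
  LinearMap.toContinuousLinearMap
    { toFun := fun M => M i j, map_add' := fun _ _ => rfl, map_smul' := fun _ _ => rfl }

lemma integral_entry {f : ℝ → Matrix (Fin N) (Fin N) ℂ} {a b : ℝ}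
    (hf : IntervalIntegrable f volume a b) (i j : Fin N) :
    (∫ τ in a..b, f τ) i j = ∫ τ in a..b, f τ i j :=
  (ContinuousLinearMap.intervalIntegral_comp_comm (entryCLM i j) hf).symm

lemma of_integral {f : ℝ → Matrix (Fin N) (Fin N) ℂ} {a b : ℝ}
    (hf : IntervalIntegrable f volume a b) :
    (Matrix.of fun i j => ∫ τ in a..b, f τ i j) = ∫ τ in a..b, f τ := by
  ext i j
  rw [integral_entry hf i j]
  rfl

/-- pull a constant matrix out of an interval integral (left). -/
lemma integral_const_mul' {f : ℝ → Matrix (Fin N) (Fin N) ℂ} {a b : ℝ} (C : Matrix (Fin N) (Fin N) ℂ)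
    (hf : IntervalIntegrable f volume a b) :
    ∫ τ in a..b, C * f τ = C * ∫ τ in a..b, f τ := by
  have := ContinuousLinearMap.intervalIntegral_comp_comm
    (LinearMap.toContinuousLinearMap (LinearMap.mulLeft ℝ C)) hf
  simpa using this

/-- pull a constant matrix out of an interval integral (right). -/
lemma integral_mul_const' {f : ℝ → Matrix (Fin N) (Fin N) ℂ} {a b : ℝ} (C : Matrix (Fin N) (Fin N) ℂ)
    (hf : IntervalIntegrable f volume a b) :
    ∫ τ in a..b, f τ * C = (∫ τ in a..b, f τ) * C := by
  have := ContinuousLinearMap.intervalIntegral_comp_comm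
    (LinearMap.toContinuousLinearMap (LinearMap.mulRight ℝ C)) hf
  simpa using this

/-- Fubini on a triangle for globally continuous integrands. -/
lemma fubini_triangle {E : Type*} [NormedAddCommGroup E] [NormedSpace ℝ E] [CompleteSpace E]
    {G : ℝ → ℝ → E} {s t : ℝ} (hst : s ≤ t)
    (hG : Continuous fun p : ℝ × ℝ => G p.1 p.2) :
    ∫ σ in s..t, (∫ τ in s..σ, G σ τ) = ∫ τ in s..t, (∫ σ in τ..t, G σ τ) := by
  set tri : Set (ℝ × ℝ) := {p : ℝ × ℝ | s ≤ p.2 ∧ p.2 ≤ p.1 ∧ p.1 ≤ t} with htri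
  have htri_closed : IsClosed tri := by
    apply IsClosed.inter (isClosed_le continuous_const continuous_snd)
    exact IsClosed.inter (isClosed_le continuous_snd continuous_fst)
      (isClosed_le continuous_fst continuous_const)
  have hsub : tri ⊆ Icc s t ×ˢ Icc s t := by
    rintro ⟨a, b⟩ ⟨h1, h2, h3⟩
    exact ⟨⟨h1.trans h2, h3⟩, ⟨h1, h2.trans h3⟩⟩
  have hcomp : IsCompact tri :=
    (isCompact_Icc.prod isCompact_Icc).of_isClosed_subset htri_closed hsub
  set H : ℝ × ℝ → E := tri.indicator (fun p => G p.1 p.2) with hH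
  have hH_int : Integrable H (volume : Measure (ℝ × ℝ)) := by
    rw [hH, integrable_indicator_iff htri_closed.measurableSet]
    exact hG.continuousOn.integrableOn_compact hcomp
  have hH_int' : Integrable (Function.uncurry fun σ τ => H (σ, τ))
      ((volume : Measure ℝ).prod (volume : Measure ℝ)) := by
    rw [← Measure.volume_eq_prod]
    exact hH_int
  have swap := MeasureTheory.integral_integral_swap hH_int'
  -- left side
  have inner1 : ∀ σ, (∫ τ, H (σ, τ)) = if σ ∈ Icc s t then ∫ τ in s..σ, G σ τ else 0 := by
    intro σ
    by_cases hσ : σ ∈ Icc s t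
    · rw [if_pos hσ]
      have hfun : (fun τ => H (σ, τ)) = (Icc s σ).indicator (fun τ => G σ τ) := by
        funext τ
        rw [hH]
        by_cases hτ : τ ∈ Icc s σ
        · rw [Set.indicator_of_mem hτ, Set.indicator_of_mem]
          exact ⟨hτ.1, hτ.2, hσ.2⟩
        · rw [Set.indicator_of_notMem hτ, Set.indicator_of_notMem]
          rintro ⟨h1, h2, _⟩; exact hτ ⟨h1, h2⟩
      rw [hfun, MeasureTheory.integral_indicator measurableSet_Icc,
        MeasureTheory.integral_Icc_eq_integral_Ioc,
        intervalIntegral.integral_of_le hσ.1]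
    · rw [if_neg hσ]
      have hfun : (fun τ => H (σ, τ)) = fun _ => (0 : E) := by
        funext τ
        rw [hH, Set.indicator_of_notMem]
        rintro ⟨h1, h2, h3⟩
        exact hσ ⟨h1.trans h2, h3⟩
      rw [hfun, integral_const, smul_zero]
  have inner2 : ∀ τ, (∫ σ, H (σ, τ)) = if τ ∈ Icc s t then ∫ σ in τ..t, G σ τ else 0 := by
    intro τ
    by_cases hτ : τ ∈ Icc s t
    · rw [if_pos hτ]
      have hfun : (fun σ => H (σ, τ)) = (Icc τ t).indicator (fun σ => G σ τ) := by
        funext σ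
        rw [hH]
        by_cases hσ : σ ∈ Icc τ t
        · rw [Set.indicator_of_mem hσ, Set.indicator_of_mem]
          exact ⟨hτ.1, hσ.1, hσ.2⟩
        · rw [Set.indicator_of_notMem hσ, Set.indicator_of_notMem]
          rintro ⟨_, h2, h3⟩; exact hσ ⟨h2, h3⟩
      rw [hfun, MeasureTheory.integral_indicator measurableSet_Icc,
        MeasureTheory.integral_Icc_eq_integral_Ioc,
        intervalIntegral.integral_of_le hτ.2]
    · rw [if_neg hτ]
      have hfun : (fun σ => H (σ, τ)) = fun _ => (0 : E) := by
        funext σ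
        rw [hH, Set.indicator_of_notMem]
        rintro ⟨h1, h2, h3⟩
        exact hτ ⟨h1, h2.trans h3⟩
      rw [hfun, integral_const, smul_zero]
  have left_eq : (∫ σ, ∫ τ, H (σ, τ)) = ∫ σ in s..t, (∫ τ in s..σ, G σ τ) := by
    rw [← MeasureTheory.setIntegral_eq_integral_of_forall_compl_eq_zero
      (s := Icc s t) (fun σ hσ => by rw [inner1 σ, if_neg hσ])]
    rw [MeasureTheory.setIntegral_congr_fun measurableSet_Icc
      (fun σ hσ => by rw [inner1 σ, if_pos hσ])]
    rw [MeasureTheory.integral_Icc_eq_integral_Ioc, intervalIntegral.integral_of_le hst]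
  have right_eq : (∫ τ, ∫ σ, H (σ, τ)) = ∫ τ in s..t, (∫ σ in τ..t, G σ τ) := by
    rw [← MeasureTheory.setIntegral_eq_integral_of_forall_compl_eq_zero
      (s := Icc s t) (fun τ hτ => by rw [inner2 τ, if_neg hτ])]
    rw [MeasureTheory.setIntegral_congr_fun measurableSet_Icc
      (fun τ hτ => by rw [inner2 τ, if_pos hτ])]
    rw [MeasureTheory.integral_Icc_eq_integral_Ioc, intervalIntegral.integral_of_le hst]
  rw [← left_eq, ← right_eq]
  exact swap

variable {A : ℝ → Matrix (Fin N) (Fin N) ℂ}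

lemma contK (CA : Continuous A) :
    ∀ k, Continuous fun p : ℝ × ℝ => iterK A (k + 1) p.1 p.2 := by
  intro k
  induction k with
  | zero => exact CA.comp continuous_fst
  | succ k ih =>
    have hF : Continuous fun q : ℝ × ℝ => iterK A (k + 1) q.1 q.2 * A q.2 :=
      ih.mul (CA.comp continuous_snd)
    have h1 : ∀ p : ℝ × ℝ, iterK A (k + 2) p.1 p.2
        = ∫ τ in p.2..p.1, iterK A (k + 1) p.1 τ * A τ := by
      intro p
      show (Matrix.of fun i j => ∫ τ in p.2..p.1, (iterK A (k + 1) p.1 τ * A τ) i j) = _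
      exact of_integral ((hF.comp (continuous_const.prodMk continuous_id)).intervalIntegrable _ _)
    have c1 : Continuous fun p : ℝ × ℝ => ∫ τ in (0:ℝ)..p.1, iterK A (k + 1) p.1 τ * A τ := by
      exact intervalIntegral.continuous_parametric_intervalIntegral_of_continuous (μ := volume)
        (f := fun (p : ℝ × ℝ) τ => iterK A (k + 1) p.1 τ * A τ)
        (hF.comp ((continuous_fst.comp continuous_fst).prodMk continuous_snd)) continuous_fst
    have c2 : Continuous fun p : ℝ × ℝ => ∫ τ in (0:ℝ)..p.2, iterK A (k + 1) p.1 τ * A τ := by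
      exact intervalIntegral.continuous_parametric_intervalIntegral_of_continuous (μ := volume)
        (f := fun (p : ℝ × ℝ) τ => iterK A (k + 1) p.1 τ * A τ)
        (hF.comp ((continuous_fst.comp continuous_fst).prodMk continuous_snd)) continuous_snd
    have heq : (fun p : ℝ × ℝ => iterK A (k + 2) p.1 p.2)
        = fun p : ℝ × ℝ => (∫ τ in (0:ℝ)..p.1, iterK A (k + 1) p.1 τ * A τ)
          - ∫ τ in (0:ℝ)..p.2, iterK A (k + 1) p.1 τ * A τ := by
      funext p
      have hc : Continuous fun τ => iterK A (k + 1) p.1 τ * A τ :=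
        hF.comp (continuous_const.prodMk continuous_id)
      rw [h1 p, ← intervalIntegral.integral_interval_sub_left
        (hc.intervalIntegrable (0:ℝ) p.1) (hc.intervalIntegrable (0:ℝ) p.2)]
    rw [heq]
    exact c1.sub c2

lemma iterK_succ (CA : Continuous A) (k : ℕ) (t s : ℝ) :
    iterK A (k + 2) t s = ∫ τ in s..t, iterK A (k + 1) t τ * A τ := by
  show (Matrix.of fun i j => ∫ τ in s..t, (iterK A (k + 1) t τ * A τ) i j) = _
  have hc : Continuous fun τ => iterK A (k + 1) t τ * A τ :=
    (((contK CA k).mul (CA.comp continuous_snd)).comp (continuous_const.prodMk continuous_id))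
  exact of_integral (hc.intervalIntegrable s t)

lemma normK (CA : Continuous A) {M : ℝ} (hM0 : 0 ≤ M)
    (hM : ∀ τ ∈ Icc (0:ℝ) 1, ‖A τ‖ ≤ M) :
    ∀ (k : ℕ) {s t : ℝ}, 0 ≤ s → s ≤ t → t ≤ 1 →
      ‖iterK A (k + 1) t s‖ ≤ M ^ (k + 1) * (t - s) ^ k / (k.factorial : ℝ) := by
  intro k
  induction k with
  | zero =>
    intro s t hs0 hst ht1
    show ‖A t‖ ≤ M ^ (0 + 1) * (t - s) ^ 0 / ((Nat.factorial 0 : ℕ) : ℝ)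
    simpa using hM t ⟨hs0.trans hst, ht1⟩
  | succ k ih =>
    intro s t hs0 hst ht1
    rw [iterK_succ CA]
    set c : ℝ := M ^ (k + 2) / (k.factorial : ℝ) with hc
    have hc0 : 0 ≤ c := div_nonneg (pow_nonneg hM0 _) (Nat.cast_nonneg _)
    have hbd : ∀ᵐ τ ∂(volume.restrict (Set.uIoc s t)),
        ‖iterK A (k + 1) t τ * A τ‖ ≤ c * (t - τ) ^ k := by
      rw [Set.uIoc_of_le hst]
      filter_upwards [ae_restrict_mem measurableSet_Ioc] with τ hτ
      have h1 : ‖iterK A (k + 1) t τ‖ ≤ M ^ (k + 1) * (t - τ) ^ k / (k.factorial : ℝ) :=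
        ih (hs0.trans hτ.1.le) hτ.2 ht1
      have h2 : ‖A τ‖ ≤ M := hM τ ⟨hs0.trans hτ.1.le, hτ.2.trans ht1⟩
      calc ‖iterK A (k + 1) t τ * A τ‖ ≤ ‖iterK A (k + 1) t τ‖ * ‖A τ‖ := norm_mul_le _ _
        _ ≤ (M ^ (k + 1) * (t - τ) ^ k / (k.factorial : ℝ)) * M := by
            apply mul_le_mul h1 h2 (norm_nonneg _)
            exact div_nonneg (mul_nonneg (pow_nonneg hM0 _)
              (pow_nonneg (by linarith [hτ.2] : (0:ℝ) ≤ t - τ) _)) (Nat.cast_nonneg _)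
        _ = c * (t - τ) ^ k := by rw [hc]; ring
    have hgint : IntervalIntegrable (fun τ => c * (t - τ) ^ k) volume s t :=
      (continuous_const.mul ((continuous_const.sub continuous_id).pow k)).intervalIntegrable _ _
    have hle := intervalIntegral.norm_integral_le_abs_of_norm_le hbd hgint
    have hcalc : ∫ τ in s..t, c * (t - τ) ^ k = c * ((t - s) ^ (k + 1) / (k + 1)) := by
      rw [intervalIntegral.integral_const_mul]
      congr 1
      have := intervalIntegral.integral_comp_sub_left (a := s) (b := t)
        (fun x => x ^ k) t
      rw [this, sub_self, integral_pow]
      simp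
    rw [hcalc] at hle
    refine hle.trans (le_of_eq ?_)
    have h1 : (0:ℝ) ≤ (t - s) ^ (k + 1) := pow_nonneg (by linarith) _
    have h2 : (0:ℝ) < (k:ℝ) + 1 := by positivity
    rw [abs_of_nonneg (by positivity), hc, Nat.factorial_succ]
    push_cast
    rw [div_mul_div_comm, mul_comm ((k.factorial : ℝ)) ((k : ℝ) + 1)]

lemma summable_u {M : ℝ} (hM0 : 0 ≤ M) :
    Summable (fun k : ℕ => M ^ (k + 1) / (k.factorial : ℝ)) := by
  have := (Real.summable_pow_div_factorial M).mul_left M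
  apply this.congr
  intro k
  rw [pow_succ]
  ring

lemma norm_le_u (CA : Continuous A) {M : ℝ} (hM0 : 0 ≤ M)
    (hM : ∀ τ ∈ Icc (0:ℝ) 1, ‖A τ‖ ≤ M) (k : ℕ) {s t : ℝ}
    (hs0 : 0 ≤ s) (hst : s ≤ t) (ht1 : t ≤ 1) :
    ‖iterK A (k + 1) t s‖ ≤ M ^ (k + 1) / (k.factorial : ℝ) := by
  refine (normK CA hM0 hM k hs0 hst ht1).trans ?_
  have h1 : (t - s) ^ k ≤ 1 := pow_le_one₀ (by linarith) (by linarith)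
  have h2 : (0:ℝ) ≤ t - s := by linarith
  calc M ^ (k + 1) * (t - s) ^ k / (k.factorial : ℝ)
      ≤ M ^ (k + 1) * 1 / (k.factorial : ℝ) := by
        gcongr
    _ = M ^ (k + 1) / (k.factorial : ℝ) := by rw [mul_one]

lemma unifT (CA : Continuous A) {M : ℝ} (hM0 : 0 ≤ M)
    (hM : ∀ τ ∈ Icc (0:ℝ) 1, ‖A τ‖ ≤ M) :
    TendstoUniformlyOn
      (fun n (p : ℝ × ℝ) => ∑ k ∈ Finset.range n, iterK A (k + 1) p.1 p.2)
      (fun p => resolventSum A p.1 p.2) atTop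
      {p : ℝ × ℝ | 0 ≤ p.2 ∧ p.2 ≤ p.1 ∧ p.1 ≤ 1} := by
  exact tendstoUniformlyOn_tsum_nat (summable_u hM0)
    (fun k p hp => norm_le_u CA hM0 hM k hp.1 hp.2.1 hp.2.2)

lemma summK (CA : Continuous A) {M : ℝ} (hM0 : 0 ≤ M)
    (hM : ∀ τ ∈ Icc (0:ℝ) 1, ‖A τ‖ ≤ M) {s t : ℝ}
    (hs0 : 0 ≤ s) (hst : s ≤ t) (ht1 : t ≤ 1) :
    Summable (fun k : ℕ => iterK A (k + 1) t s) :=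
  Summable.of_norm_bounded (summable_u hM0)
    (fun k => norm_le_u CA hM0 hM k hs0 hst ht1)

lemma contC (CA : Continuous A) {M : ℝ} (hM0 : 0 ≤ M)
    (hM : ∀ τ ∈ Icc (0:ℝ) 1, ‖A τ‖ ≤ M) :
    ContinuousOn (fun p : ℝ × ℝ => resolventSum A p.1 p.2)
      {p : ℝ × ℝ | 0 ≤ p.2 ∧ p.2 ≤ p.1 ∧ p.1 ≤ 1} := by
  apply (unifT CA hM0 hM).continuousOn
  apply Filter.Eventually.frequently
  filter_upwards with n
  exact (continuous_finset_sum _ (fun k _ => contK CA k)).continuousOn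

lemma leftK (CA : Continuous A) :
    ∀ (k : ℕ) {s t : ℝ}, 0 ≤ s → s ≤ t → t ≤ 1 →
      iterK A (k + 2) t s = A t * ∫ τ in s..t, iterK A (k + 1) τ s := by
  intro k
  induction k with
  | zero =>
    intro s t hs0 hst ht1
    rw [iterK_succ CA 0]
    have h1 : (fun τ => iterK A 1 t τ * A τ) = fun τ => A t * A τ := rfl
    have h2 : (fun τ => iterK A 1 τ s) = fun τ => A τ := rfl
    rw [h1, h2]
    exact integral_const_mul' (A t) (CA.intervalIntegrable s t)
  | succ k ih =>
    intro s t hs0 hst ht1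
    rw [iterK_succ CA (k + 1)]
    have hG : Continuous fun p : ℝ × ℝ => iterK A (k + 1) p.1 p.2 * A p.2 :=
      (contK CA k).mul (CA.comp continuous_snd)
    -- continuity of J τ = ∫ σ in τ..t, iterK A (k+1) σ τ
    have hJcont : Continuous fun τ => ∫ σ in τ..t, iterK A (k + 1) σ τ := by
      have : Continuous fun τ => ∫ σ in t..τ, iterK A (k + 1) σ τ := by
        exact intervalIntegral.continuous_parametric_intervalIntegral_of_continuous (μ := volume)
          (f := fun (τ : ℝ) σ => iterK A (k + 1) σ τ)
          ((contK CA k).comp (continuous_snd.prodMk continuous_fst)) continuous_id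
      have heq : (fun τ => ∫ σ in τ..t, iterK A (k + 1) σ τ)
          = fun τ => -∫ σ in t..τ, iterK A (k + 1) σ τ := by
        funext τ; rw [intervalIntegral.integral_symm]
      rw [heq]
      exact this.neg
    have hstep : EqOn (fun τ => iterK A (k + 2) t τ * A τ)
        (fun τ => A t * ((∫ σ in τ..t, iterK A (k + 1) σ τ) * A τ)) (uIcc s t) := by
      intro τ hτ
      rw [uIcc_of_le hst] at hτ
      simp only
      rw [ih (hs0.trans hτ.1) hτ.2 ht1, mul_assoc]
    rw [intervalIntegral.integral_congr hstep]
    have hint : IntervalIntegrable (fun τ => (∫ σ in τ..t, iterK A (k + 1) σ τ) * A τ)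
        volume s t := (hJcont.mul CA).intervalIntegrable s t
    rw [integral_const_mul' (A t) hint]
    congr 1
    have hstep2 : EqOn (fun τ => (∫ σ in τ..t, iterK A (k + 1) σ τ) * A τ)
        (fun τ => ∫ σ in τ..t, iterK A (k + 1) σ τ * A τ) (uIcc s t) := by
      intro τ _
      simp only
      have hc : Continuous fun σ => iterK A (k + 1) σ τ :=
        (contK CA k).comp (continuous_id.prodMk continuous_const)
      rw [integral_mul_const' (A τ) (hc.intervalIntegrable τ t)]
    rw [intervalIntegral.integral_congr hstep2]
    -- Fubini
    have hfub := (fubini_triangle hst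
      (G := fun σ τ => iterK A (k + 1) σ τ * A τ) hG).symm
    rw [hfub]
    apply intervalIntegral.integral_congr
    intro σ hσ
    simp only
    rw [iterK_succ CA k]

lemma keyC (CA : Continuous A) {M : ℝ} (hM0 : 0 ≤ M)
    (hM : ∀ τ ∈ Icc (0:ℝ) 1, ‖A τ‖ ≤ M) {s t : ℝ}
    (hs0 : 0 ≤ s) (hst : s ≤ t) (ht1 : t ≤ 1) :
    resolventSum A t s = A t + A t * ∫ τ in s..t, resolventSum A τ s := by
  have hswap : HasSum (fun k : ℕ => ∫ τ in s..t, iterK A (k + 1) τ s)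
      (∫ τ in s..t, resolventSum A τ s) := by
    have hbase : HasSum (fun k : ℕ => ∫ τ in Ioc s t, iterK A (k + 1) τ s)
        (∫ τ in Ioc s t, ∑' k : ℕ, iterK A (k + 1) τ s) := by
      apply MeasureTheory.hasSum_integral_of_summable_integral_norm
      · intro k
        have hc : Continuous fun τ => iterK A (k + 1) τ s :=
          (contK CA k).comp (continuous_id.prodMk continuous_const)
        exact ((hc.integrableOn_Icc (μ := volume)).mono_set Ioc_subset_Icc_self :
          IntegrableOn _ (Ioc s t) volume)
      · apply Summable.of_nonneg_of_le
          (fun k => integral_nonneg (fun τ => norm_nonneg _))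
          (fun k => ?_) ((summable_u hM0).mul_left (t - s))
        have hc : Continuous fun τ => iterK A (k + 1) τ s :=
          (contK CA k).comp (continuous_id.prodMk continuous_const)
        calc ∫ τ in Ioc s t, ‖iterK A (k + 1) τ s‖
            ≤ ∫ _τ in Ioc s t, M ^ (k + 1) / (k.factorial : ℝ) := by
              refine setIntegral_mono_on
                (hc.norm.integrableOn_Icc.mono_set Ioc_subset_Icc_self)
                (integrableOn_const (μ := volume) (C := M ^ (k + 1) / (k.factorial : ℝ)) measure_Ioc_lt_top.ne)
                measurableSet_Ioc (fun τ hτ => ?_)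
              exact norm_le_u CA hM0 hM k hs0 hτ.1.le (hτ.2.trans ht1)
          _ = (t - s) * (M ^ (k + 1) / (k.factorial : ℝ)) := by
              rw [setIntegral_const, Real.volume_real_Ioc, smul_eq_mul,
                max_eq_left (by linarith)]
    simp only [intervalIntegral.integral_of_le hst]
    exact hbase
  have htail : ∑' k : ℕ, iterK A (k + 1 + 1) t s
      = A t * ∫ τ in s..t, resolventSum A τ s := by
    calc ∑' k : ℕ, iterK A (k + 1 + 1) t s
        = ∑' k : ℕ, A t * ∫ τ in s..t, iterK A (k + 1) τ s :=
          tsum_congr (fun k => leftK CA k hs0 hst ht1)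
      _ = A t * ∫ τ in s..t, resolventSum A τ s := (hswap.mul_left (A t)).tsum_eq
  erw [resolventSum, Summable.tsum_eq_zero_add (summK CA hM0 hM hs0 hst ht1), htail]
  rfl

lemma main' (CA : Continuous A) {B : ℝ × ℝ → Matrix (Fin N) (Fin N) ℂ} (CB : Continuous B)
    {M : ℝ} (hM0 : 0 ≤ M) (hMg : ∀ τ, ‖A τ‖ ≤ M)
    {s : ℝ} (hs0 : 0 ≤ s) (hs1 : s ≤ 1) :
    (∀ t ∈ Icc s 1,
      HasDerivWithinAt (solU A B s) (A t * solU A B s t + B (t, s)) (Icc s 1) t) ∧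
    ∀ V : ℝ → Matrix (Fin N) (Fin N) ℂ,
      (∀ t ∈ Icc s 1, HasDerivWithinAt V (A t * V t + B (t, s)) (Icc s 1) t) →
      V s = 1 → EqOn V (solU A B s) (Icc s 1) := by
  have hM : ∀ τ ∈ Icc (0:ℝ) 1, ‖A τ‖ ≤ M := fun τ _ => hMg τ
  -- clamping map into the triangle
  set Q : ℝ → ℝ := fun x => max 0 (min 1 x) with hQ
  have hQcont : Continuous Q := continuous_const.max (continuous_const.min continuous_id)
  have hQeq : ∀ x, 0 ≤ x → x ≤ 1 → Q x = x := by
    intro x h0 h1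
    rw [hQ]
    simp only [min_eq_right h1, max_eq_right h0]
  have hQ0 : ∀ x, 0 ≤ Q x := fun x => le_max_left _ _
  have hQ1 : ∀ x, Q x ≤ 1 := fun x => max_le zero_le_one (min_le_left _ _)
  set e : ℝ × ℝ → ℝ × ℝ := fun p => (Q p.1, min (Q p.2) (Q p.1)) with he
  have he_cont : Continuous e :=
    (hQcont.comp continuous_fst).prodMk
      ((hQcont.comp continuous_snd).min (hQcont.comp continuous_fst))
  have he_mem : ∀ p : ℝ × ℝ, e p ∈ {p : ℝ × ℝ | 0 ≤ p.2 ∧ p.2 ≤ p.1 ∧ p.1 ≤ 1} :=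
    fun p => ⟨le_min (hQ0 _) (hQ0 _), min_le_right _ _, hQ1 _⟩
  have he_eq : ∀ p : ℝ × ℝ, 0 ≤ p.2 → p.2 ≤ p.1 → p.1 ≤ 1 → e p = p := by
    intro p h0 h1 h2
    show (Q p.1, min (Q p.2) (Q p.1)) = p
    rw [hQeq p.1 (h0.trans h1) h2, hQeq p.2 h0 (h1.trans h2), min_eq_left h1]
  set Cl : ℝ × ℝ → Matrix (Fin N) (Fin N) ℂ :=
    fun p => resolventSum A (e p).1 (e p).2 with hCl
  have CC : Continuous Cl := by
    show Continuous ((fun q : ℝ × ℝ => resolventSum A q.1 q.2) ∘ e)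
    exact ContinuousOn.comp_continuous (contC CA hM0 hM) he_cont he_mem
  have CeqC : ∀ p : ℝ × ℝ, 0 ≤ p.2 → p.2 ≤ p.1 → p.1 ≤ 1 → Cl p = resolventSum A p.1 p.2 := by
    intro p h0 h1 h2
    show resolventSum A (e p).1 (e p).2 = resolventSum A p.1 p.2
    rw [he_eq p h0 h1 h2]
  set g : ℝ → Matrix (Fin N) (Fin N) ℂ := fun x => ∫ ρ in s..x, Cl (x, ρ) * B (ρ, s) with hg
  have hgcont : Continuous g := by
    rw [hg]
    exact intervalIntegral.continuous_parametric_intervalIntegral_of_continuous (μ := volume)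
      (f := fun x ρ => Cl (x, ρ) * B (ρ, s))
      (((CC.comp ((continuous_fst).prodMk continuous_snd)).mul
        (CB.comp (continuous_snd.prodMk continuous_const)))) continuous_id
  set Φ : ℝ → Matrix (Fin N) (Fin N) ℂ := fun τ => Cl (τ, s) + B (τ, s) + g τ with hΦ
  have hΦcont : Continuous Φ := by
    rw [hΦ]
    exact ((CC.comp (continuous_id.prodMk continuous_const)).add
      (CB.comp (continuous_id.prodMk continuous_const))).add hgcont
  -- solU as an honest primitive of Φ
  have solU_eq : ∀ t ∈ Icc s 1, solU A B s t = 1 + ∫ τ in s..t, Φ τ := by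
    intro t ht
    have hst : s ≤ t := ht.1
    have hbig : ∀ τ ∈ uIcc s t,
        (resolventSum A τ s + B (τ, s)
          + Matrix.of fun i' j' => ∫ ρ in s..τ, (resolventSum A τ ρ * B (ρ, s)) i' j') = Φ τ := by
      intro τ hτ
      rw [uIcc_of_le hst] at hτ
      have hτ1 : τ ≤ 1 := hτ.2.trans ht.2
      have e1 : resolventSum A τ s = Cl (τ, s) := (CeqC (τ, s) hs0 hτ.1 hτ1).symm
      have e2 : (Matrix.of fun i' j' => ∫ ρ in s..τ, (resolventSum A τ ρ * B (ρ, s)) i' j')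
          = g τ := by
        have hint : IntervalIntegrable (fun ρ => Cl (τ, ρ) * B (ρ, s)) volume s τ :=
          ((CC.comp (continuous_const.prodMk continuous_id)).mul
            (CB.comp (continuous_id.prodMk continuous_const))).intervalIntegrable s τ
        calc (Matrix.of fun i' j' => ∫ ρ in s..τ, (resolventSum A τ ρ * B (ρ, s)) i' j')
            = Matrix.of fun i' j' => ∫ ρ in s..τ, (Cl (τ, ρ) * B (ρ, s)) i' j' := by
              refine congrArg Matrix.of (funext fun i' => funext fun j' => ?_)
              refine intervalIntegral.integral_congr (fun ρ hρ => ?_)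
              rw [uIcc_of_le hτ.1] at hρ
              rw [CeqC (τ, ρ) (hs0.trans hρ.1) hρ.2 hτ1]
          _ = g τ := of_integral hint
      rw [e1, e2, hΦ]
    rw [solU]
    congr 1
    calc (Matrix.of fun i j => ∫ τ in s..t,
          (resolventSum A τ s + B (τ, s)
            + Matrix.of fun i' j' => ∫ ρ in s..τ, (resolventSum A τ ρ * B (ρ, s)) i' j') i j)
        = Matrix.of fun i j => ∫ τ in s..t, (Φ τ) i j := by
          refine congrArg Matrix.of (funext fun i => funext fun j => ?_)
          refine intervalIntegral.integral_congr (fun τ hτ => ?_)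
          rw [hbig τ hτ]
      _ = ∫ τ in s..t, Φ τ := of_integral (hΦcont.intervalIntegrable s t)
  have hU0 : solU A B s s = 1 := by
    rw [solU_eq s ⟨le_refl s, hs1⟩, intervalIntegral.integral_same, add_zero]
  -- derivative of solU is Φ
  have hderiv : ∀ t ∈ Icc s 1, HasDerivWithinAt (solU A B s) (Φ t) (Icc s 1) t := by
    intro t ht
    have h1 : HasDerivAt (fun u => ∫ τ in s..u, Φ τ) (Φ t) t :=
      intervalIntegral.integral_hasDerivAt_right (hΦcont.intervalIntegrable s t)
        (hΦcont.stronglyMeasurable.stronglyMeasurableAtFilter) hΦcont.continuousAt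
    have h2 : HasDerivWithinAt (fun u => 1 + ∫ τ in s..u, Φ τ) (Φ t) (Icc s 1) t :=
      (h1.const_add (1 : Matrix (Fin N) (Fin N) ℂ)).hasDerivWithinAt
    exact h2.congr (fun u hu => solU_eq u hu) (solU_eq t ht)
  -- the algebraic identity Φ t = A t * solU t + B (t, s)
  have halg : ∀ t ∈ Icc s 1, Φ t = A t * solU A B s t + B (t, s) := by
    intro t ht
    obtain ⟨hst, ht1⟩ := ht
    have hClcont : Continuous fun τ => Cl (τ, s) :=
      CC.comp (continuous_id.prodMk continuous_const)
    have hBcont : Continuous fun τ => B (τ, s) :=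
      CB.comp (continuous_id.prodMk continuous_const)
    have hGcont : Continuous fun p : ℝ × ℝ => Cl (p.1, p.2) * B (p.2, s) :=
      (CC.comp (continuous_fst.prodMk continuous_snd)).mul
        (CB.comp (continuous_snd.prodMk continuous_const))
    set h : ℝ → Matrix (Fin N) (Fin N) ℂ :=
      fun ρ => ∫ τ' in ρ..t, Cl (τ', ρ) * B (ρ, s) with hh
    have hhcont : Continuous h := by
      have c0 : Continuous fun ρ => ∫ τ' in t..ρ, Cl (τ', ρ) * B (ρ, s) :=
        intervalIntegral.continuous_parametric_intervalIntegral_of_continuous (μ := volume)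
          (f := fun ρ τ' => Cl (τ', ρ) * B (ρ, s))
          ((CC.comp (continuous_snd.prodMk continuous_fst)).mul
            (CB.comp (continuous_fst.prodMk continuous_const))) continuous_id
      have hsym : h = fun ρ => -∫ τ' in t..ρ, Cl (τ', ρ) * B (ρ, s) := by
        funext ρ
        rw [hh]
        exact intervalIntegral.integral_symm t ρ
      rw [hsym]
      exact c0.neg
    have e1 : Cl (t, s) = A t + A t * ∫ τ in s..t, Cl (τ, s) := by
      rw [CeqC (t, s) hs0 hst ht1, keyC CA hM0 hM hs0 hst ht1]
      congr 2
      refine intervalIntegral.integral_congr (fun τ hτ => ?_)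
      rw [uIcc_of_le hst] at hτ
      exact (CeqC (τ, s) hs0 hτ.1 (hτ.2.trans ht1)).symm
    have e2 : g t = A t * (∫ ρ in s..t, B (ρ, s)) + A t * ∫ ρ in s..t, h ρ := by
      have hEq : EqOn (fun ρ => Cl (t, ρ) * B (ρ, s))
          (fun ρ => A t * B (ρ, s) + A t * h ρ) (uIcc s t) := by
        intro ρ hρ
        rw [uIcc_of_le hst] at hρ
        have hρ0 : 0 ≤ ρ := hs0.trans hρ.1
        have e3 : Cl (t, ρ) = A t + A t * ∫ τ' in ρ..t, Cl (τ', ρ) := by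
          rw [CeqC (t, ρ) hρ0 hρ.2 ht1, keyC CA hM0 hM hρ0 hρ.2 ht1]
          congr 2
          refine intervalIntegral.integral_congr (fun τ' hτ' => ?_)
          rw [uIcc_of_le hρ.2] at hτ'
          exact (CeqC (τ', ρ) hρ0 hτ'.1 (hτ'.2.trans ht1)).symm
        have hCint : IntervalIntegrable (fun τ' => Cl (τ', ρ)) volume ρ t :=
          (CC.comp (continuous_id.prodMk continuous_const)).intervalIntegrable ρ t
        show Cl (t, ρ) * B (ρ, s) = A t * B (ρ, s) + A t * h ρ
        rw [e3, add_mul, mul_assoc, ← integral_mul_const' (B (ρ, s)) hCint]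
      have hint1 : IntervalIntegrable (fun ρ => A t * B (ρ, s)) volume s t :=
        (continuous_const.mul hBcont).intervalIntegrable s t
      have hint2 : IntervalIntegrable (fun ρ => A t * h ρ) volume s t :=
        (continuous_const.mul hhcont).intervalIntegrable s t
      show (∫ ρ in s..t, Cl (t, ρ) * B (ρ, s)) = _
      rw [intervalIntegral.integral_congr hEq, intervalIntegral.integral_add hint1 hint2,
        integral_const_mul' (A t) (hBcont.intervalIntegrable s t),
        integral_const_mul' (A t) (hhcont.intervalIntegrable s t)]
    have e4 : ∫ ρ in s..t, h ρ = ∫ τ in s..t, g τ := by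
      have hfub := fubini_triangle hst (G := fun σ τ => Cl (σ, τ) * B (τ, s)) hGcont
      exact hfub.symm
    have hsplit : ∫ τ in s..t, Φ τ
        = (∫ τ in s..t, Cl (τ, s)) + (∫ τ in s..t, B (τ, s)) + ∫ τ in s..t, g τ := by
      have hrfl : Φ = fun τ => (fun τ => Cl (τ, s) + B (τ, s)) τ + g τ := rfl
      rw [hrfl]
      rw [intervalIntegral.integral_add (f := fun τ => Cl (τ, s) + B (τ, s)) ((hClcont.add hBcont).intervalIntegrable s t)
        (hgcont.intervalIntegrable s t),
        intervalIntegral.integral_add (hClcont.intervalIntegrable s t)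
        (hBcont.intervalIntegrable s t)]
    have hgoal : Cl (t, s) + B (t, s) + g t
        = A t * (1 + ((∫ τ in s..t, Cl (τ, s)) + (∫ τ in s..t, B (τ, s))
            + ∫ τ in s..t, g τ)) + B (t, s) := by
      rw [e1, e2, e4]
      noncomm_ring
    rw [solU_eq t ⟨hst, ht1⟩, hsplit]
    exact hgoal
  refine ⟨fun t ht => ?_, fun V hV hV0 => ?_⟩
  · rw [← halg t ht]
    exact hderiv t ht
  -- uniqueness via Grönwall
  · have hlip : ∀ τ : ℝ, LipschitzOnWith (Real.toNNReal M)
        (fun x : Matrix (Fin N) (Fin N) ℂ => A τ * x + B (τ, s)) univ := by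
      intro τ
      refine LipschitzOnWith.of_dist_le_mul (fun x _ y _ => ?_)
      rw [dist_eq_norm, dist_eq_norm]
      have hsub : (A τ * x + B (τ, s)) - (A τ * y + B (τ, s)) = A τ * (x - y) := by
        rw [add_sub_add_right_eq_sub, mul_sub]
      rw [hsub, Real.coe_toNNReal M hM0]
      exact (norm_mul_le _ _).trans (mul_le_mul_of_nonneg_right (hMg τ) (norm_nonneg _))
    have hmem_nhds : ∀ τ ∈ Ico s 1, Icc s 1 ∈ 𝓝[Ici τ] τ := by
      intro τ hτ
      refine mem_nhdsWithin.mpr ⟨Iio 1, isOpen_Iio, hτ.2, fun x hx => ⟨hτ.1.trans hx.2, hx.1.le⟩⟩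
    have hVd : ∀ τ ∈ Ico s 1, HasDerivWithinAt V (A τ * V τ + B (τ, s)) (Ici τ) τ :=
      fun τ hτ => (hV τ ⟨hτ.1, hτ.2.le⟩).mono_of_mem_nhdsWithin (hmem_nhds τ hτ)
    have hUd : ∀ τ ∈ Ico s 1,
        HasDerivWithinAt (solU A B s) (A τ * solU A B s τ + B (τ, s)) (Ici τ) τ := by
      intro τ hτ
      have := (hderiv τ ⟨hτ.1, hτ.2.le⟩).mono_of_mem_nhdsWithin (hmem_nhds τ hτ)
      rwa [halg τ ⟨hτ.1, hτ.2.le⟩] at this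
    have hcontV : ContinuousOn V (Icc s 1) := fun τ hτ => (hV τ hτ).continuousWithinAt
    have hcontU : ContinuousOn (solU A B s) (Icc s 1) :=
      fun τ hτ => (hderiv τ hτ).continuousWithinAt
    exact ODE_solution_unique_of_mem_Icc_right (fun τ _ => hlip τ) hcontV hVd (fun _ _ => mem_univ _)
      hcontU hUd (fun _ _ => mem_univ _) (hV0.trans hU0.symm)

lemma solU_self (A : ℝ → Matrix (Fin N) (Fin N) ℂ) (B : ℝ × ℝ → Matrix (Fin N) (Fin N) ℂ)
    (s : ℝ) : solU A B s s = 1 := by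
  have hz : (Matrix.of fun i j =>
      ∫ τ in s..s,
        (resolventSum A τ s + B (τ, s)
          + Matrix.of fun i' j' => ∫ ρ in s..τ, (resolventSum A τ ρ * B (ρ, s)) i' j') i j)
      = (0 : Matrix (Fin N) (Fin N) ℂ) := by
    ext i j
    rw [Matrix.of_apply, intervalIntegral.integral_same]
    rfl
  rw [solU, hz, add_zero]

lemma iterK_congr {A' : ℝ → Matrix (Fin N) (Fin N) ℂ} (hAA : EqOn A A' (Icc (0:ℝ) 1)) :
    ∀ (k : ℕ) {t s : ℝ}, 0 ≤ s → s ≤ t → t ≤ 1 → iterK A (k + 1) t s = iterK A' (k + 1) t s := by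
  intro k
  induction k with
  | zero =>
    intro t s hs0 hst ht1
    exact hAA ⟨hs0.trans hst, ht1⟩
  | succ k ih =>
    intro t s hs0 hst ht1
    show (Matrix.of fun i j => ∫ τ in s..t, (iterK A (k + 1) t τ * A τ) i j)
        = Matrix.of fun i j => ∫ τ in s..t, (iterK A' (k + 1) t τ * A' τ) i j
    refine congrArg Matrix.of (funext fun i => funext fun j => ?_)
    refine intervalIntegral.integral_congr (fun τ hτ => ?_)
    rw [uIcc_of_le hst] at hτ
    rw [ih (hs0.trans hτ.1) hτ.2 ht1, hAA ⟨hs0.trans hτ.1, hτ.2.trans ht1⟩]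

lemma resolventSum_congr {A' : ℝ → Matrix (Fin N) (Fin N) ℂ} (hAA : EqOn A A' (Icc (0:ℝ) 1))
    {t s : ℝ} (hs0 : 0 ≤ s) (hst : s ≤ t) (ht1 : t ≤ 1) :
    resolventSum A t s = resolventSum A' t s :=
  tsum_congr fun k => iterK_congr hAA k hs0 hst ht1

lemma solU_congr {A' : ℝ → Matrix (Fin N) (Fin N) ℂ}
    {B B' : ℝ × ℝ → Matrix (Fin N) (Fin N) ℂ} (hAA : EqOn A A' (Icc (0:ℝ) 1))
    (hBB : EqOn B B' (Icc (0:ℝ) 1 ×ˢ Icc (0:ℝ) 1)) {s : ℝ} (hs0 : 0 ≤ s) (hs1 : s ≤ 1)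
    {t : ℝ} (hst : s ≤ t) (ht1 : t ≤ 1) : solU A B s t = solU A' B' s t := by
  rw [solU, solU]
  congr 1
  refine congrArg Matrix.of (funext fun i => funext fun j => ?_)
  refine intervalIntegral.integral_congr (fun τ hτ => ?_)
  rw [uIcc_of_le hst] at hτ
  have hτ0 : 0 ≤ τ := hs0.trans hτ.1
  have hτ1 : τ ≤ 1 := hτ.2.trans ht1
  have h1 : resolventSum A τ s = resolventSum A' τ s := resolventSum_congr hAA hs0 hτ.1 hτ1
  have h2 : B (τ, s) = B' (τ, s) := hBB ⟨⟨hτ0, hτ1⟩, hs0, hs1⟩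
  have h3 : (Matrix.of fun i' j' => ∫ ρ in s..τ, (resolventSum A τ ρ * B (ρ, s)) i' j')
      = Matrix.of fun i' j' => ∫ ρ in s..τ, (resolventSum A' τ ρ * B' (ρ, s)) i' j' := by
    refine congrArg Matrix.of (funext fun i' => funext fun j' => ?_)
    refine intervalIntegral.integral_congr (fun ρ hρ => ?_)
    rw [uIcc_of_le hτ.1] at hρ
    rw [resolventSum_congr hAA (hs0.trans hρ.1) hρ.2 hτ1,
      hBB ⟨⟨hs0.trans hρ.1, hρ.2.trans hτ1⟩, hs0, hs1⟩]
  show (resolventSum A τ s + B (τ, s) + _) i j = _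
  rw [h1, h2, h3]

end SolUAux
end Aux


theorem solU_unique_solution {N : ℕ}
    (A : ℝ → Matrix (Fin N) (Fin N) ℂ)
    (B : ℝ × ℝ → Matrix (Fin N) (Fin N) ℂ)
    (hA : AnalyticOnNhd ℝ A (Icc (0:ℝ) 1))
    (hB : AnalyticOnNhd ℝ B (Icc (0:ℝ) 1 ×ˢ Icc (0:ℝ) 1))
    (s : ℝ) (hs : s ∈ Icc (0:ℝ) 1) :
    TendstoUniformlyOn
      (fun n (p : ℝ × ℝ) => ∑ k ∈ Finset.range n, iterK A (k + 1) p.1 p.2)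
      (fun p => resolventSum A p.1 p.2) atTop
      {p : ℝ × ℝ | 0 ≤ p.2 ∧ p.2 ≤ p.1 ∧ p.1 ≤ 1} ∧
    solU A B s s = 1 ∧
    (∀ t ∈ Icc s 1,
      HasDerivWithinAt (solU A B s) (A t * solU A B s t + B (t, s)) (Icc s 1) t) ∧
    ∀ V : ℝ → Matrix (Fin N) (Fin N) ℂ,
      (∀ t ∈ Icc s 1, HasDerivWithinAt V (A t * V t + B (t, s)) (Icc s 1) t) →
      V s = 1 → EqOn V (solU A B s) (Icc s 1) := by
  obtain ⟨hs0, hs1⟩ := hs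
  obtain ⟨C, hC⟩ := isCompact_Icc.exists_bound_of_continuousOn hA.continuousOn
  set M : ℝ := max C 0 with hMdef
  have hM0 : (0:ℝ) ≤ M := le_max_right _ _
  set Q : ℝ → ℝ := fun x => max 0 (min 1 x) with hQ
  have hQcont : Continuous Q := continuous_const.max (continuous_const.min continuous_id)
  have hQ0 : ∀ x, 0 ≤ Q x := fun x => le_max_left _ _
  have hQ1 : ∀ x, Q x ≤ 1 := fun x => max_le zero_le_one (min_le_left _ _)
  have hQeq : ∀ x, 0 ≤ x → x ≤ 1 → Q x = x := by
    intro x h0 h1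
    rw [hQ]
    simp only [min_eq_right h1, max_eq_right h0]
  set A' : ℝ → Matrix (Fin N) (Fin N) ℂ := fun x => A (Q x) with hA'
  set B' : ℝ × ℝ → Matrix (Fin N) (Fin N) ℂ := fun p => B (Q p.1, Q p.2) with hB'
  have CA' : Continuous A' :=
    hA.continuousOn.comp_continuous hQcont (fun x => ⟨hQ0 x, hQ1 x⟩)
  have CB' : Continuous B' :=
    hB.continuousOn.comp_continuous
      ((hQcont.comp continuous_fst).prodMk (hQcont.comp continuous_snd))
      (fun p => ⟨⟨hQ0 _, hQ1 _⟩, ⟨hQ0 _, hQ1 _⟩⟩)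
  have hMg : ∀ τ, ‖A' τ‖ ≤ M := fun τ =>
    (hC (Q τ) ⟨hQ0 τ, hQ1 τ⟩).trans (le_max_left _ _)
  have hAA : EqOn A' A (Icc (0:ℝ) 1) := by
    intro x hx
    show A (Q x) = A x
    rw [hQeq x hx.1 hx.2]
  have hBB : EqOn B' B (Icc (0:ℝ) 1 ×ˢ Icc (0:ℝ) 1) := by
    intro p hp
    show B (Q p.1, Q p.2) = B p
    rw [hQeq _ hp.1.1 hp.1.2, hQeq _ hp.2.1 hp.2.2]
  have conj1 : TendstoUniformlyOn
      (fun n (p : ℝ × ℝ) => ∑ k ∈ Finset.range n, iterK A (k + 1) p.1 p.2)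
      (fun p => resolventSum A p.1 p.2) atTop
      {p : ℝ × ℝ | 0 ≤ p.2 ∧ p.2 ≤ p.1 ∧ p.1 ≤ 1} := by
    have h := SolUAux.unifT CA' hM0 (fun τ _ => hMg τ)
    refine (h.congr ?_).congr_right ?_
    · filter_upwards with n
      intro p hp
      exact Finset.sum_congr rfl
        (fun k _ => SolUAux.iterK_congr hAA k hp.1 hp.2.1 hp.2.2)
    · intro p hp
      exact SolUAux.resolventSum_congr hAA hp.1 hp.2.1 hp.2.2
  obtain ⟨hder', huniq'⟩ := SolUAux.main' CA' CB' hM0 hMg hs0 hs1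
  have hsolUeq : ∀ t ∈ Icc s 1, solU A B s t = solU A' B' s t := fun t ht =>
    SolUAux.solU_congr hAA.symm hBB.symm hs0 hs1 ht.1 ht.2
  refine ⟨conj1, SolUAux.solU_self A B s, fun t ht => ?_, fun V hV hV0 => ?_⟩
  · have h2 := (hder' t ht).congr (fun u hu => hsolUeq u hu) (hsolUeq t ht)
    have heq : A' t * solU A' B' s t + B' (t, s) = A t * solU A B s t + B (t, s) := by
      rw [hAA ⟨hs0.trans ht.1, ht.2⟩, hBB ⟨⟨hs0.trans ht.1, ht.2⟩, ⟨hs0, hs1⟩⟩,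
        ← hsolUeq t ht]
    rwa [heq] at h2
  · have hV' : ∀ t ∈ Icc s 1, HasDerivWithinAt V (A' t * V t + B' (t, s)) (Icc s 1) t := by
      intro t ht
      have h := hV t ht
      rwa [show A t = A' t from (hAA ⟨hs0.trans ht.1, ht.2⟩).symm,
        show B (t, s) = B' (t, s) from (hBB ⟨⟨hs0.trans ht.1, ht.2⟩, ⟨hs0, hs1⟩⟩).symm] at h
    intro x hx
    exact (huniq' V hV' hV0 hx).trans (hsolUeq x hx).symm
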